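/- Let ν be an ergodic shift-invariant Borel probability measure on the full shift Σ_α = (D_α ∪ {β})^ℤ with ν([β]) < 1/2, where [β] = {x : x₀ = β}. Then ν gives measure 1 to the set K_α of points x such that every occurrence of the symbol β is matched: for every i with x_i = β there exists j ≥ 1 with H_{α,i−j+1}(x) = H_{α,i+1}(x). -/

import Mathlib

open MeasureTheory
open scoped ENNReal

instance (M : ℕ) : MeasurableSpace (Option (Fin M)) := ⊤

instance (M : ℕ) : MeasurableSingletonClass (Option (Fin M)) :=
  ⟨fun _ => MeasurableSpace.measurableSet_top⟩

/-- The left shift on a two-sided full shift. -/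
def leftShift {S : Type*} (x : ℤ → S) : ℤ → S := fun i => x (i + 1)

/-- The symbol weight on the alphabet `D_α ∪ {β}` (encoded as `Option (Fin M)`, with
`none = β` and `some k = α_k`): `+1` on `D_α` and `−1` on `β`. -/
def epsα {M : ℕ} (a : Option (Fin M)) : ℤ := if a = none then -1 else 1

/-- The height function `H_{α,i}` on `Σ_α = (D_α ∪ {β})^ℤ`. -/
def Hα {M : ℕ} (x : ℤ → Option (Fin M)) (i : ℤ) : ℤ :=
  if 0 ≤ i then ∑ j ∈ Finset.range i.toNat, epsα (x j)
  else - ∑ j ∈ Finset.range (-i).toNat, epsα (x (-(j : ℤ) - 1))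

/-- `K_α`: the set of points of `Σ_α` in which every occurrence of `β` is matched. -/
def Kα (M : ℕ) : Set (ℤ → Option (Fin M)) :=
  {x | ∀ i : ℤ, x i = none → ∃ j : ℕ, 1 ≤ j ∧ Hα x (i - j + 1) = Hα x (i + 1)}

namespace Stmt9Aux

open Filter Finset

/-! ### Generic maximal-ergodic (Garsia) machinery -/

variable {X : Type*} [MeasurableSpace X]

/-- Running maximum of Birkhoff sums (including the empty sum `0`). -/
def phi (T : X → X) (g : X → ℝ) : ℕ → X → ℝ
  | 0 => fun _ => 0
  | n + 1 => fun x => max (phi T g n x) (birkhoffSum T g (n + 1) x)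

lemma phi_nonneg (T : X → X) (g : X → ℝ) : ∀ n x, 0 ≤ phi T g n x
  | 0, x => le_refl 0
  | n + 1, x => le_trans (phi_nonneg T g n x) (le_max_left _ _)

lemma measurable_phi {T : X → X} (hT : Measurable T) {g : X → ℝ} (hg : Measurable g) :
    ∀ n, Measurable (phi T g n)
  | 0 => measurable_const
  | n + 1 => by
    refine (measurable_phi hT hg n).max ?_
    exact Finset.measurable_sum _ fun i _ => hg.comp (hT.iterate i)

lemma birkhoffSum_le_phi (T : X → X) (g : X → ℝ) :
    ∀ {n N : ℕ}, n ≤ N → ∀ x, birkhoffSum T g n x ≤ phi T g N x := by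
  intro n N
  induction N with
  | zero => intro h x; interval_cases n; simp [birkhoffSum_zero, phi]
  | succ N ih =>
    intro h x
    rcases Nat.lt_or_ge n (N + 1) with h' | h'
    · exact le_trans (ih (by omega) x) (le_max_left _ _)
    · have : n = N + 1 := by omega
      subst this
      exact le_max_right _ _

lemma phi_pos_attained (T : X → X) (g : X → ℝ) :
    ∀ {N : ℕ} {x : X}, 0 < phi T g N x →
      ∃ n, 1 ≤ n ∧ n ≤ N ∧ phi T g N x = birkhoffSum T g n x := by
  intro N
  induction N with
  | zero => intro x h; simp [phi] at h
  | succ N ih =>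
    intro x h
    rcases le_or_gt (birkhoffSum T g (N + 1) x) (phi T g N x) with hc | hc
    · have hmax : phi T g (N + 1) x = phi T g N x := max_eq_left hc
      rw [hmax] at h ⊢
      obtain ⟨n, h1, h2, h3⟩ := ih h
      exact ⟨n, h1, by omega, h3⟩
    · have hmax : phi T g (N + 1) x = birkhoffSum T g (N + 1) x := max_eq_right hc.le
      exact ⟨N + 1, by omega, le_refl _, hmax⟩

lemma birkhoffSum_le_of_abs (T : X → X) {g : X → ℝ} (hg : ∀ x, |g x| ≤ 1) (n : ℕ) (x : X) :
    birkhoffSum T g n x ≤ n := by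
  calc birkhoffSum T g n x ≤ ∑ _i ∈ Finset.range n, (1 : ℝ) :=
        Finset.sum_le_sum fun i _ => le_trans (le_abs_self _) (hg _)
    _ = n := by simp

lemma phi_le (T : X → X) {g : X → ℝ} (hg : ∀ x, |g x| ≤ 1) :
    ∀ (N : ℕ) (x : X), phi T g N x ≤ N
  | 0, x => by simp [phi]
  | N + 1, x => by
    refine max_le (le_trans (phi_le T hg N x) (by push_cast; linarith)) ?_
    exact_mod_cast birkhoffSum_le_of_abs T hg (N + 1) x

lemma phi_key (T : X → X) (g : X → ℝ) {N : ℕ} {x : X} (h : 0 < phi T g N x) :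
    phi T g N x ≤ g x + phi T g N (T x) := by
  obtain ⟨n, h1, h2, h3⟩ := phi_pos_attained T g h
  obtain ⟨k, rfl⟩ : ∃ k, n = k + 1 := ⟨n - 1, by omega⟩
  rw [h3, birkhoffSum_succ']
  exact add_le_add le_rfl (birkhoffSum_le_phi T g (by omega) (T x))

/-- Garsia's maximal ergodic inequality. -/
lemma garsia (μ : Measure X) [IsProbabilityMeasure μ] {T : X → X}
    (hT : MeasurePreserving T μ μ) (hTe : MeasurableEmbedding T)
    {g : X → ℝ} (hgm : Measurable g) (hg1 : ∀ x, |g x| ≤ 1) (N : ℕ) :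
    0 ≤ ∫ x in {y | 0 < phi T g N y}, g x ∂μ := by
  set A := {y | 0 < phi T g N y} with hAdef
  have hTm := hT.measurable
  have hphim : Measurable (phi T g N) := measurable_phi hTm hgm N
  have hAm : MeasurableSet A := measurableSet_lt measurable_const hphim
  have hint : Integrable (phi T g N) μ := by
    refine (integrable_const (N : ℝ)).mono' hphim.aestronglyMeasurable ?_
    refine Eventually.of_forall fun x => ?_
    rw [Real.norm_eq_abs, abs_of_nonneg (phi_nonneg T g N x)]
    exact phi_le T hg1 N x
  have hintT : Integrable (fun x => phi T g N (T x)) μ :=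
    (hT.integrable_comp hphim.aestronglyMeasurable).2 hint
  have hintg : Integrable g μ := by
    refine (integrable_const (1 : ℝ)).mono' hgm.aestronglyMeasurable ?_
    exact Eventually.of_forall fun x => by rw [Real.norm_eq_abs]; exact hg1 x
  have h1 : ∫ x in A, (phi T g N x - phi T g N (T x)) ∂μ ≤ ∫ x in A, g x ∂μ := by
    refine setIntegral_mono_on ((hint.sub hintT).integrableOn) hintg.integrableOn hAm ?_
    intro x hx
    have := phi_key T g hx
    linarith
  have h5 : ∫ x in A, (phi T g N x - phi T g N (T x)) ∂μ
      = ∫ x in A, phi T g N x ∂μ - ∫ x in A, phi T g N (T x) ∂μ :=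
    integral_sub hint.integrableOn hintT.integrableOn
  have h2 : ∫ x in A, phi T g N x ∂μ = ∫ x, phi T g N x ∂μ := by
    rw [← integral_add_compl hAm hint]
    have hz : ∫ x in Aᶜ, phi T g N x ∂μ = 0 := by
      refine setIntegral_eq_zero_of_forall_eq_zero fun x hx => ?_
      exact le_antisymm (not_lt.1 hx) (phi_nonneg T g N x)
    rw [hz, add_zero]
  have h3 : ∫ x in A, phi T g N (T x) ∂μ ≤ ∫ x, phi T g N (T x) ∂μ :=
    setIntegral_le_integral hintT (Eventually.of_forall fun x => phi_nonneg T g N (T x))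
  have h4 : ∫ x, phi T g N (T x) ∂μ = ∫ x, phi T g N x ∂μ := hT.integral_comp hTe _
  linarith

/-! ### The shift, its inverse, and the walk sums -/

/-- The right shift, inverse of `leftShift`. -/
def rShift {S : Type*} (x : ℤ → S) : ℤ → S := fun i => x (i - 1)

/-- Shift by an arbitrary integer. -/
def zShift {S : Type*} (i : ℤ) (x : ℤ → S) : ℤ → S := fun t => x (t + i)

lemma rShift_leftShift {S : Type*} (x : ℤ → S) : rShift (leftShift x) = x :=
  funext fun i => by simp [rShift, leftShift]

lemma leftShift_rShift {S : Type*} (x : ℤ → S) : leftShift (rShift x) = x :=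
  funext fun i => by simp [rShift, leftShift]

lemma rShift_iterate {S : Type*} (m : ℕ) (x : ℤ → S) (t : ℤ) :
    (rShift^[m] x) t = x (t - m) := by
  induction m generalizing x with
  | zero => simp
  | succ n ih =>
    rw [Function.iterate_succ_apply, ih]
    show x (t - n - 1) = x (t - (n + 1 : ℕ))
    congr 1
    push_cast
    ring

lemma leftShift_iterate {S : Type*} (m : ℕ) (x : ℤ → S) (t : ℤ) :
    (leftShift^[m] x) t = x (t + m) := by
  induction m generalizing x with
  | zero => simp
  | succ n ih =>
    rw [Function.iterate_succ_apply, ih]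
    show leftShift x (t + n) = x (t + (n + 1 : ℕ))
    show x (t + n + 1) = x (t + (n + 1 : ℕ))
    congr 1
    push_cast
    ring

lemma measurable_leftShift {S : Type*} [MeasurableSpace S] :
    Measurable (leftShift (S := S)) :=
  measurable_pi_lambda _ fun i => measurable_pi_apply _

lemma measurable_rShift {S : Type*} [MeasurableSpace S] :
    Measurable (rShift (S := S)) :=
  measurable_pi_lambda _ fun i => measurable_pi_apply _

/-- `leftShift` as a measurable equivalence. -/
def shiftEquiv (S : Type*) [MeasurableSpace S] : (ℤ → S) ≃ᵐ (ℤ → S) where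
  toFun := leftShift
  invFun := rShift
  left_inv := rShift_leftShift
  right_inv := leftShift_rShift
  measurable_toFun := measurable_leftShift
  measurable_invFun := measurable_rShift

variable {M : ℕ}

/-- The symbol weight at coordinate `0`. -/
def fe (x : ℤ → Option (Fin M)) : ℤ := epsα (x 0)

/-- Backward partial sums of the weights: `SW j x = Σ_{m<j} ε(x_{-m})`. -/
def SW (j : ℕ) (x : ℤ → Option (Fin M)) : ℤ := birkhoffSum rShift fe j x

lemma epsα_cases (a : Option (Fin M)) : epsα a = -1 ∨ epsα a = 1 := by
  unfold epsα; split <;> simp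

lemma SW_zero (x : ℤ → Option (Fin M)) : SW 0 x = 0 := by simp [SW, birkhoffSum_zero]

lemma SW_succ (n : ℕ) (x : ℤ → Option (Fin M)) :
    SW (n + 1) x = SW n x + epsα (x (-(n : ℤ))) := by
  rw [SW, birkhoffSum_succ, SW]
  congr 2
  rw [fe, rShift_iterate]
  congr 1
  ring

lemma SW_le (n : ℕ) (x : ℤ → Option (Fin M)) : SW n x ≤ n := by
  induction n with
  | zero => simp [SW_zero]
  | succ n ih =>
    have := epsα_cases (x (-(n : ℤ)))
    have := SW_succ n x
    push_cast
    omega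

lemma measurable_fe : Measurable (fe (M := M)) :=
  measurable_from_top.comp (measurable_pi_apply 0)

lemma measurable_SW (n : ℕ) : Measurable (SW (M := M) n) := by
  unfold SW birkhoffSum
  exact Finset.measurable_sum _ fun i _ => measurable_fe.comp (measurable_rShift.iterate i)

/-- The bad set: every backward sum stays at most `-1`. -/
def Eset (M : ℕ) : Set (ℤ → Option (Fin M)) := {x | ∀ j : ℕ, 1 ≤ j → SW j x ≤ -1}

lemma measurableSet_Eset : MeasurableSet (Eset M) := by
  have : Eset M = ⋂ j : ℕ, ⋂ _ : 1 ≤ j, SW (M := M) j ⁻¹' {z | z ≤ -1} := by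
    ext x; simp [Eset]
  rw [this]
  exact .iInter fun j => .iInter fun _ => measurable_SW j trivial

lemma mem_Eset_of_no_zero {x : ℤ → Option (Fin M)} (h0 : x 0 = none)
    (hne : ∀ j : ℕ, 1 ≤ j → SW j x ≠ 0) : x ∈ Eset M := by
  intro j hj
  induction j with
  | zero => omega
  | succ n ih =>
    rcases Nat.eq_zero_or_pos n with rfl | hn
    · rw [SW_succ, SW_zero]
      simp [epsα, h0]
    · have h1 := ih hn
      have h2 := SW_succ n x
      have h3 := epsα_cases (x (-(n : ℤ)))
      have h4 := hne (n + 1) (by omega)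
      omega

/-! ### Height function lemmas -/

lemma Hα_neg (x : ℤ → Option (Fin M)) (n : ℕ) :
    Hα x (-(n : ℤ)) = - ∑ j ∈ Finset.range n, epsα (x (-(j : ℤ) - 1)) := by
  rcases Nat.eq_zero_or_pos n with rfl | hn
  · simp [Hα]
  · rw [Hα, if_neg (by omega), neg_neg, Int.toNat_natCast]

lemma Hα_step (x : ℤ → Option (Fin M)) (n : ℤ) :
    Hα x (n + 1) = Hα x n + epsα (x n) := by
  rcases n with n | n
  · show Hα x ((n : ℤ) + 1) = Hα x (n : ℤ) + epsα (x (n : ℤ))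
    rw [Hα, Hα, if_pos (by omega), if_pos (by omega)]
    have h1 : ((n : ℤ) + 1).toNat = n + 1 := by omega
    have h2 : ((n : ℤ)).toNat = n := by omega
    rw [h1, h2, Finset.sum_range_succ]
  · show Hα x (Int.negSucc n + 1) = Hα x (Int.negSucc n) + epsα (x (Int.negSucc n))
    have e1 : Int.negSucc n + 1 = -(n : ℤ) := by
      rw [Int.negSucc_eq]; ring
    have e2 : Int.negSucc n = -((n + 1 : ℕ) : ℤ) := by
      rw [Int.negSucc_eq]; push_cast; ring
    rw [e1, e2, Hα_neg, Hα_neg, Finset.sum_range_succ]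
    have e3 : -((n : ℤ)) - 1 = -((n + 1 : ℕ) : ℤ) := by push_cast; ring
    rw [e3]
    ring

lemma Hα_diff (x : ℤ → Option (Fin M)) (i : ℤ) (j : ℕ) :
    Hα x (i + 1) - Hα x (i + 1 - j) = ∑ m ∈ Finset.range j, epsα (x (i - m)) := by
  induction j with
  | zero => simp
  | succ n ih =>
    rw [Finset.sum_range_succ, ← ih]
    have h2 : Hα x (i + 1 - (n : ℤ)) = Hα x (i - n) + epsα (x (i - n)) := by
      rw [show i + 1 - (n : ℤ) = (i - n) + 1 by ring]
      exact Hα_step x (i - n)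
    have h3 : i + 1 - ((n + 1 : ℕ) : ℤ) = i - n := by push_cast; ring
    rw [h3]
    linarith [h2]

lemma SW_zShift (x : ℤ → Option (Fin M)) (i : ℤ) (j : ℕ) :
    SW j (zShift i x) = ∑ m ∈ Finset.range j, epsα (x (i - m)) := by
  unfold SW birkhoffSum
  refine Finset.sum_congr rfl fun m _ => ?_
  rw [fe, rShift_iterate]
  show epsα (zShift i x (0 - m)) = _
  unfold zShift
  congr 1
  ring

lemma matched_iff (x : ℤ → Option (Fin M)) (i : ℤ) (j : ℕ) :
    Hα x (i - j + 1) = Hα x (i + 1) ↔ SW j (zShift i x) = 0 := by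
  rw [SW_zShift, ← Hα_diff x i j, show i + 1 - (j : ℤ) = i - j + 1 by ring, sub_eq_zero, eq_comm]

/-! ### Measure preservation of the shifts -/

lemma zShift_ofNat {S : Type*} (n : ℕ) : zShift (S := S) (n : ℤ) = leftShift^[n] :=
  funext fun x => funext fun t => (leftShift_iterate n x t).symm

lemma zShift_negSucc {S : Type*} (n : ℕ) : zShift (S := S) (Int.negSucc n) = rShift^[n + 1] := by
  refine funext fun x => funext fun t => ?_
  rw [rShift_iterate]
  show x (t + Int.negSucc n) = x (t - (n + 1 : ℕ))
  congr 1

end Stmt9Aux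

open Stmt9Aux Filter

/-- STATEMENT 9 auxiliary: the bad set is null. -/
lemma Eset_null (M : ℕ) (ν : Measure (ℤ → Option (Fin M)))
    [IsProbabilityMeasure ν] (herg : Ergodic leftShift ν)
    (hβ : ν {x | x 0 = none} < 1 / 2) : ν (Eset M) = 0 := by
  by_contra hE0
  set β : Set (ℤ → Option (Fin M)) := {x | x 0 = none} with hβdef
  have hβm : MeasurableSet β := by
    have : β = (fun x : ℤ → Option (Fin M) => x 0) ⁻¹' {none} := rfl
    rw [this]
    exact measurable_pi_apply 0 (measurableSet_singleton none)
  have mpL : MeasurePreserving leftShift ν ν := herg.toMeasurePreserving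
  have mpR : MeasurePreserving rShift ν ν :=
    MeasurePreserving.symm (shiftEquiv (Option (Fin M))) mpL
  have ergR : Ergodic rShift ν := by
    refine ⟨mpR, ⟨fun s hs hinv => herg.toPreErgodic.aeconst_set hs ?_⟩⟩
    conv_lhs => rw [← hinv]
    rw [← Set.preimage_comp]
    have : rShift ∘ leftShift
        = (id : (ℤ → Option (Fin M)) → (ℤ → Option (Fin M))) :=
      funext fun x => rShift_leftShift x
    rw [this, Set.preimage_id]
  -- The set of points visiting `Eset` infinitely often has full measure.
  set U : Set (ℤ → Option (Fin M)) :=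
    {x | ∃ᶠ n in atTop, rShift^[n] x ∈ Eset M} with hUdef
  have hUm : MeasurableSet U := by
    have : U = ⋂ N : ℕ, ⋃ n : ℕ, ⋃ _ : N ≤ n, (rShift^[n]) ⁻¹' (Eset M) := by
      ext x
      simp [hUdef, frequently_atTop]
    rw [this]
    exact .iInter fun N => .iUnion fun n => .iUnion fun _ =>
      (measurable_rShift.iterate n) measurableSet_Eset
  have hUinv : rShift ⁻¹' U = U := by
    ext x
    simp only [Set.mem_preimage, hUdef, Set.mem_setOf_eq, frequently_atTop]
    constructor
    · intro h N
      obtain ⟨n, hn, hmem⟩ := h N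
      exact ⟨n + 1, by omega, by rwa [Function.iterate_succ_apply]⟩
    · intro h N
      obtain ⟨n, hn, hmem⟩ := h (N + 1)
      obtain ⟨m, rfl⟩ : ∃ m, n = m + 1 := ⟨n - 1, by omega⟩
      refine ⟨m, by omega, ?_⟩
      rwa [Function.iterate_succ_apply] at hmem
  have hrec : ∀ᵐ x ∂ν, x ∈ Eset M → x ∈ U :=
    mpR.conservative.ae_mem_imp_frequently_image_mem measurableSet_Eset.nullMeasurableSet
  have hU1 : ν U = 1 := by
    rcases ergR.toPreErgodic.measure_self_or_compl_eq_zero hUm hUinv with h | h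
    · exfalso
      apply hE0
      refine le_zero_iff.1 ?_
      have h1 : ν (Eset M \ U) = 0 := by
        have h2 : ν {x | ¬(x ∈ Eset M → x ∈ U)} = 0 := ae_iff.1 hrec
        refine measure_mono_null ?_ h2
        intro x hx
        exact fun hc => hx.2 (hc hx.1)
      have hsub2 : Eset M ⊆ U ∪ Eset M \ U := fun x hx =>
        (em (x ∈ U)).elim Or.inl fun hxu => Or.inr ⟨hx, hxu⟩
      calc ν (Eset M) ≤ ν (U ∪ Eset M \ U) := measure_mono hsub2
        _ ≤ ν U + ν (Eset M \ U) := measure_union_le _ _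
        _ = 0 := by rw [h, h1, add_zero]
    · rwa [prob_compl_eq_zero_iff hUm] at h
  -- Points of `U` eventually have some negative backward sum.
  set A : ℕ → Set (ℤ → Option (Fin M)) :=
    fun N => {x | ∃ n : ℕ, 1 ≤ n ∧ n ≤ N ∧ SW n x ≤ -1} with hAdef
  have hAm : ∀ N, MeasurableSet (A N) := by
    intro N
    have : A N = ⋃ n : ℕ, ⋃ _ : 1 ≤ n ∧ n ≤ N, SW (M := M) n ⁻¹' {z | z ≤ -1} := by
      ext x; simp [hAdef]; tauto
    rw [this]
    exact .iUnion fun n => .iUnion fun _ => measurable_SW n trivial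
  have hUsub : U ⊆ ⋃ N, A N := by
    intro x hx
    have hinf : {n : ℕ | rShift^[n] x ∈ Eset M}.Infinite :=
      Nat.frequently_atTop_iff_infinite.1 hx
    obtain ⟨n₀, hn₀⟩ := hinf.nonempty
    have claim : ∀ k : ℕ, ∃ m : ℕ, rShift^[m] x ∈ Eset M ∧ SW m x ≤ (n₀ : ℤ) - k := by
      intro k
      induction k with
      | zero => exact ⟨n₀, hn₀, by simpa using SW_le n₀ x⟩
      | succ k ih =>
        obtain ⟨m, hmE, hSm⟩ := ih
        obtain ⟨n, hnmem, hmn⟩ := hinf.exists_gt m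
        refine ⟨n, hnmem, ?_⟩
        have hadd := birkhoffSum_add rShift (fe (M := M)) m (n - m) x
        rw [show m + (n - m) = n by omega] at hadd
        have hE' : SW (n - m) (rShift^[m] x) ≤ -1 := hmE (n - m) (by omega)
        have : SW n x = SW m x + SW (n - m) (rShift^[m] x) := hadd
        push_cast
        push_cast at hSm
        omega
    obtain ⟨m, _, hSm⟩ := claim (n₀ + 1)
    have hm1 : 1 ≤ m := by
      rcases Nat.eq_zero_or_pos m with rfl | h
      · rw [SW_zero] at hSm; omega
      · exact h
    have hSm' : SW m x ≤ -1 := by push_cast at hSm; omega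
    exact Set.mem_iUnion.2 ⟨m, m, hm1, le_refl m, hSm'⟩
  have hUA : ν (⋃ N, A N) = 1 :=
    le_antisymm prob_le_one (hU1 ▸ measure_mono hUsub)
  have hmono : Monotone A := fun a b hab x ⟨n, h1, h2, h3⟩ => ⟨n, h1, h2.trans hab, h3⟩
  have h2β : 2 * ν β < 1 := by
    have := (ENNReal.mul_lt_mul_iff_right (a := 2) (by norm_num) (by norm_num)).2 hβ
    calc 2 * ν β < 2 * (1 / 2) := this
      _ = 1 := by
        rw [one_div]
        exact ENNReal.mul_inv_cancel (by norm_num) (by norm_num)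
  obtain ⟨N, hN⟩ : ∃ N, 2 * ν β < ν (A N) := by
    by_contra h
    push_neg at h
    have hle := le_of_tendsto' (tendsto_measure_iUnion_atTop (μ := ν) hmono) h
    rw [hUA] at hle
    exact absurd (lt_of_le_of_lt hle h2β) (lt_irrefl 1)
  -- real-valued weights
  set g : (ℤ → Option (Fin M)) → ℝ := fun x => if x 0 = none then 1 else -1 with hgdef
  have hgm : Measurable g := Measurable.ite hβm measurable_const measurable_const
  have hg1 : ∀ x, |g x| ≤ 1 := by
    intro x; rw [hgdef]; dsimp only; split <;> norm_num
  have hBg : ∀ (n : ℕ) x, birkhoffSum rShift g n x = -((SW n x : ℤ) : ℝ) := by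
    intro n x
    rw [SW]
    unfold birkhoffSum
    push_cast
    rw [← Finset.sum_neg_distrib]
    refine Finset.sum_congr rfl fun m _ => ?_
    rw [hgdef]
    unfold fe epsα
    dsimp only
    split <;> simp
  have hAg : A N = {y | 0 < Stmt9Aux.phi rShift g N y} := by
    ext x
    constructor
    · rintro ⟨n, h1, h2, h3⟩
      have hlt : (0 : ℝ) < birkhoffSum rShift g n x := by
        rw [hBg]
        have : ((SW n x : ℤ) : ℝ) ≤ -1 := by exact_mod_cast h3
        linarith
      exact lt_of_lt_of_le hlt (birkhoffSum_le_phi _ _ h2 x)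
    · intro h
      obtain ⟨n, h1, h2, heq⟩ := phi_pos_attained _ _ h
      refine ⟨n, h1, h2, ?_⟩
      have hlt : (0 : ℝ) < -((SW n x : ℤ) : ℝ) := by rw [← hBg, ← heq]; exact h
      have : (SW n x : ℝ) < 0 := by linarith
      have : SW n x < 0 := by exact_mod_cast this
      omega
  have hgars : 0 ≤ ∫ x in A N, g x ∂ν := by
    rw [hAg]
    exact garsia ν mpR (shiftEquiv (Option (Fin M))).symm.measurableEmbedding hgm hg1 N
  -- compute the integral
  have hfr : ∀ x, g x = 2 * Set.indicator β (fun _ => (1 : ℝ)) x - 1 := by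
    intro x
    rw [hgdef]
    dsimp only
    by_cases h : x 0 = none
    · rw [if_pos h, Set.indicator_of_mem (by exact h)]
      norm_num
    · rw [if_neg h, Set.indicator_of_notMem (by exact h)]
      norm_num
  have hIint : Integrable (Set.indicator β fun _ => (1 : ℝ)) (ν.restrict (A N)) :=
    ((integrable_const (1 : ℝ)).indicator hβm).integrableOn
  have hInd : ∫ x in A N, Set.indicator β (fun _ => (1 : ℝ)) x ∂ν = (ν (β ∩ A N)).toReal := by
    rw [MeasureTheory.integral_indicator hβm, Measure.restrict_restrict hβm]
    simp
    rfl
  have hgint : ∫ x in A N, g x ∂ν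
      = 2 * (ν (β ∩ A N)).toReal - (ν (A N)).toReal := by
    have : ∫ x in A N, g x ∂ν
        = ∫ x in A N, (2 * Set.indicator β (fun _ => (1 : ℝ)) x - 1) ∂ν := by
      refine integral_congr_ae (Eventually.of_forall fun x => hfr x)
    rw [this, integral_sub (hIint.const_mul 2) (integrable_const 1),
      integral_const_mul, hInd]
    simp [Measure.restrict_apply_univ]
    rfl
  have hineq : (ν (A N)).toReal ≤ 2 * (ν β).toReal := by
    rw [hgint] at hgars
    have hmle : (ν (β ∩ A N)).toReal ≤ (ν β).toReal :=
      ENNReal.toReal_mono (measure_ne_top ν β) (measure_mono Set.inter_subset_left)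
    linarith
  have hlt : 2 * (ν β).toReal < (ν (A N)).toReal := by
    have h1 : (2 * ν β).toReal < (ν (A N)).toReal := by
      refine (ENNReal.toReal_lt_toReal ?_ (measure_ne_top ν _)).2 hN
      exact ENNReal.mul_ne_top (by norm_num) (measure_ne_top ν β)
    rwa [ENNReal.toReal_mul, ENNReal.toReal_ofNat] at h1
  linarith

theorem stmt9 (M : ℕ) (hM : 2 ≤ M) (ν : Measure (ℤ → Option (Fin M)))
    [IsProbabilityMeasure ν] (herg : Ergodic leftShift ν)
    (hβ : ν {x | x 0 = none} < 1 / 2) :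
    ν (Kα M) = 1 := by
  have hE := Eset_null M ν herg hβ
  have mpL : MeasurePreserving leftShift ν ν := herg.toMeasurePreserving
  have mpR : MeasurePreserving rShift ν ν :=
    MeasurePreserving.symm (shiftEquiv (Option (Fin M))) mpL
  have mpZ : ∀ i : ℤ, MeasurePreserving (zShift (S := Option (Fin M)) i) ν ν := by
    intro i
    rcases i with n | n
    · rw [Int.ofNat_eq_coe, zShift_ofNat]
      exact mpL.iterate n
    · rw [zShift_negSucc]
      exact mpR.iterate (n + 1)
  set Nset : Set (ℤ → Option (Fin M)) :=
    ⋃ i : ℤ, zShift (S := Option (Fin M)) i ⁻¹' Eset M with hNdef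
  have hNm : MeasurableSet Nset :=
    .iUnion fun i => (mpZ i).measurable measurableSet_Eset
  have hNnull : ν Nset = 0 := by
    refine measure_iUnion_null fun i => ?_
    rw [(mpZ i).measure_preimage measurableSet_Eset.nullMeasurableSet]
    exact hE
  have hsub : Nsetᶜ ⊆ Kα M := by
    intro x hx i hi
    by_contra hno
    push_neg at hno
    apply hx
    refine Set.mem_iUnion.2 ⟨i, ?_⟩
    show zShift i x ∈ Eset M
    refine mem_Eset_of_no_zero ?_ ?_
    · show x (0 + i) = none
      rwa [zero_add]
    · intro j hj hzero
      exact hno j hj ((matched_iff x i j).2 hzero)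
  have h1 : ν Nsetᶜ = 1 := by
    rwa [prob_compl_eq_one_iff hNm]
  exact le_antisymm prob_le_one (h1 ▸ measure_mono hsub)
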